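/- Let k ≥ 2 and m ≥ 0 be integers, and set v = v₂ (the 2-adic valuation normalized by v(2)=1). Define w = 5^(k-2)·ζ − 1 where ζ is a primitive 2^m-th root of unity in an algebraic closure of Q₂. If either k is odd, or k is even and m ≥ 1, then v(w) = 2^(1-m) when m ≥ 1, and v(w) = 2 when m = 0 and k is odd. In particular (k−1)/v(w) is an integer in both cases. -/

import Mathlib

open Finset

section AuxLemmas

variable {K : Type*} [Field K] (v : Valuation K NNReal)

lemma aux_pow_sub_one_le {ζ : K} (hζ1 : v ζ ≤ 1) (j : ℕ) :
    v (ζ ^ j - 1) ≤ v (ζ - 1) := by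
  have h := geom_sum_mul ζ j
  calc v (ζ ^ j - 1) = v (∑ i ∈ range j, ζ ^ i) * v (ζ - 1) := by rw [← h, map_mul]
    _ ≤ 1 * v (ζ - 1) := by
        refine mul_le_mul_left ?_ _
        refine v.map_sum_le fun i _ => ?_
        rw [map_pow]
        exact pow_le_one' hζ1 i
    _ = v (ζ - 1) := one_mul _

lemma aux_v_zeta_one {n : ℕ} (hn : n ≠ 0) {ζ : K} (h : ζ ^ n = 1) : v ζ = 1 := by
  have : v ζ ^ n = 1 := by rw [← map_pow, h, map_one]
  exact (pow_eq_one_iff_of_nonneg (zero_le : 0 ≤ v ζ) hn).mp this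

lemma zeta_val {m : ℕ} (hm : 1 ≤ m) {ζ : K} (hζ : IsPrimitiveRoot ζ (2 ^ m)) :
    v (ζ - 1) ^ 2 ^ (m - 1) = v (2 : K) := by
  induction m generalizing ζ with
  | zero => omega
  | succ n ih =>
    rcases Nat.eq_zero_or_pos n with hn | hn
    · subst hn
      have h2 : ζ = -1 :=
        (by norm_num at hζ; exact hζ : IsPrimitiveRoot ζ 2).eq_neg_one_of_two_right
      rw [h2, show (-1 : K) - 1 = -2 by ring, Valuation.map_neg]
      norm_num
    · have hζ1 : v ζ = 1 := aux_v_zeta_one v (by positivity) hζ.pow_eq_one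
      have hx : ζ ^ 2 ^ n = -1 := by
        have hsq : (ζ ^ 2 ^ n) ^ 2 = 1 := by
          rw [← pow_mul, show 2 ^ n * 2 = 2 ^ (n + 1) by ring]
          exact hζ.pow_eq_one
        have hne : ζ ^ 2 ^ n ≠ 1 :=
          hζ.pow_ne_one_of_pos_of_lt (by positivity)
            (Nat.pow_lt_pow_right one_lt_two (Nat.lt_succ_self n))
        rcases sq_eq_one_iff.mp hsq with h | h
        · exact absurd h hne
        · exact h
      have hζ2 : IsPrimitiveRoot (ζ ^ 2) (2 ^ n) :=
        hζ.pow (by positivity) (by rw [pow_succ'])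
      have hneg : v (-ζ) ≤ 1 := by rw [Valuation.map_neg, hζ1]
      have hodd : Odd (2 ^ n + 1) :=
        Even.add_one (Nat.even_pow.mpr ⟨even_iff_two_dvd.mpr dvd_rfl, hn.ne'⟩)
      have h1 : ζ ^ (2 ^ n + 1) = -ζ := by rw [pow_add, pow_one, hx]; ring
      have h2 : (-ζ) ^ (2 ^ n + 1) = ζ := by rw [hodd.neg_pow, h1, neg_neg]
      have heq : v (ζ + 1) = v (ζ - 1) := by
        apply le_antisymm
        · have h3 := aux_pow_sub_one_le v (le_of_eq hζ1) (2 ^ n + 1)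
          rw [h1] at h3
          calc v (ζ + 1) = v (-ζ - 1) := by
                rw [show -ζ - 1 = -(ζ + 1) by ring, Valuation.map_neg]
            _ ≤ v (ζ - 1) := h3
        · have h3 := aux_pow_sub_one_le v hneg (2 ^ n + 1)
          rw [h2] at h3
          calc v (ζ - 1) ≤ v (-ζ - 1) := h3
            _ = v (ζ + 1) := by
                rw [show -ζ - 1 = -(ζ + 1) by ring, Valuation.map_neg]
      have hsq : v (ζ - 1) ^ 2 = v (ζ ^ 2 - 1) := by
        rw [show ζ ^ 2 - 1 = (ζ - 1) * (ζ + 1) by ring, map_mul, heq]; ring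
      have ihh := ih hn hζ2
      rw [Nat.add_sub_cancel,
        show (2 : ℕ) ^ n = 2 * 2 ^ (n - 1) by rw [← pow_succ']; congr 1; omega,
        pow_mul, hsq]
      exact ihh

end AuxLemmas

section PadicAux

variable [Fact (Nat.Prime 2)]
variable {K : Type*} [Field K] [Algebra ℚ_[2] K]
  (v : Valuation K NNReal) (hv : ∀ x : ℚ_[2], v (algebraMap ℚ_[2] K x) = ‖x‖₊)

include hv

lemma my_v2 : v (2 : K) = 2⁻¹ := by
  have h := hv (2 : ℚ_[2])
  rw [map_ofNat] at h
  rw [h]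
  have : ‖(2 : ℚ_[2])‖ = 2⁻¹ := by
    rw [show (2 : ℚ_[2]) = ((2 : ℕ) : ℚ_[2]) by norm_num]
    exact_mod_cast Padic.norm_p
  ext
  simpa using this

lemma my_nat_le (t : ℕ) : v ((t : K)) ≤ 1 := by
  rw [← map_natCast (algebraMap ℚ_[2] K) t, hv, ← NNReal.coe_le_coe]
  have := Padic.norm_int_le_one (p := 2) (t : ℤ)
  simp only [Int.cast_natCast] at this
  simpa using this

lemma my_nat_odd (t : ℕ) (ht : Odd t) : v ((t : K)) = 1 := by
  refine le_antisymm (my_nat_le v hv t) ?_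
  rw [← map_natCast (algebraMap ℚ_[2] K) t, hv, ← NNReal.coe_le_coe]
  have h2 : ¬ ((2 : ℤ) ∣ (t : ℤ)) := by
    rw [show ((2:ℤ)) = ((2:ℕ):ℤ) by norm_num, Int.natCast_dvd_natCast]
    exact fun hd => (Nat.not_even_iff_odd.mpr ht) (even_iff_two_dvd.mpr hd)
  have hlt := (Padic.norm_intCast_lt_one_iff (p := 2) (k := (t : ℤ))).not.mpr
    (by exact_mod_cast h2)
  push_neg at hlt
  have hle : ‖((t:ℤ) : ℚ_[2])‖ ≤ 1 := Padic.norm_int_le_one _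
  have heq : ‖((t:ℤ) : ℚ_[2])‖ = 1 := le_antisymm hle hlt
  simp only [Int.cast_natCast] at heq
  simp [heq]

omit hv in
lemma my_five (n : ℕ) :
    v ((5 : K) ^ n - 1) = v (2 : K) ^ 2 * v (((∑ i ∈ range n, 5 ^ i : ℕ) : K)) := by
  have hg := geom_sum_mul (5 : K) n
  have : (5 : K) ^ n - 1 = (2 : K) ^ 2 * ((∑ i ∈ range n, 5 ^ i : ℕ) : K) := by
    push_cast
    rw [← hg]; ring
  rw [this, map_mul, map_pow]

end PadicAux

lemma my_odd_sum (n : ℕ) (hn : Odd n) : Odd (∑ i ∈ range n, 5 ^ i) := by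
  rw [Nat.odd_iff] at hn ⊢
  rw [Finset.sum_nat_mod]
  simp [Nat.pow_mod, hn]

/-- Let `k ≥ 2`, `m ≥ 0`, and let `v` be (the unique extension to an algebraic
closure `K` of `ℚ₂` of) the 2-adic valuation, here taken multiplicatively so that the additive
valuation normalized by `val 2 = 1` corresponds to `v`.  Let `ζ` be a primitive `2^m`-th root
of unity and `w = 5^(k-2) · ζ - 1`.  If `k` is odd, or `k` is even and `m ≥ 1`, then:
`val w = 2^(1-m)` when `m ≥ 1` (expressed multiplicatively as `v w ^ (2 ^ (m-1)) = v 2`),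
and `val w = 2` when `m = 0` and `k` is odd (i.e. `v w = (v 2)^2`).  In particular
`(k - 1) / val w` is a (positive) integer in both cases, expressed as
`∃ N > 0, v w ^ N = v 2 ^ (k-1)`. -/
theorem stmt_2 [Fact (Nat.Prime 2)]
    (K : Type*) [Field K] [CharZero K] [Algebra ℚ_[2] K] [IsAlgClosure ℚ_[2] K]
    (v : Valuation K NNReal)
    (hv : ∀ x : ℚ_[2], v (algebraMap ℚ_[2] K x) = ‖x‖₊)
    (k m : ℕ) (hk : 2 ≤ k)
    (ζ : K) (hζ : IsPrimitiveRoot ζ (2 ^ m))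
    (w : K) (hw : w = (5 : K) ^ (k - 2) * ζ - 1)
    (hcase : Odd k ∨ (Even k ∧ 1 ≤ m)) :
    ((1 ≤ m → v w ^ (2 ^ (m - 1)) = v (2 : K)) ∧
      (m = 0 ∧ Odd k → v w = v (2 : K) ^ 2)) ∧
    ∃ N : ℕ, 0 < N ∧ v w ^ N = v (2 : K) ^ (k - 1) := by
  have hv2 : v (2 : K) = 2⁻¹ := my_v2 v hv
  rcases Nat.eq_zero_or_pos m with hm0 | hm1
  · -- m = 0 : ζ = 1 and k is odd
    subst hm0
    have hkodd : Odd k := by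
      rcases hcase with h | ⟨_, h⟩
      · exact h
      · omega
    obtain ⟨j, hj⟩ := hkodd
    have hj1 : 1 ≤ j := by omega
    have hζ1 : ζ = 1 := by
      have := hζ.pow_eq_one
      simpa using this
    have hodd2 : Odd (k - 2) := ⟨j - 1, by omega⟩
    have hwv : v w = v (2 : K) ^ 2 := by
      rw [hw, hζ1, mul_one, my_five v, my_nat_odd v hv _ (my_odd_sum (k - 2) hodd2),
        mul_one]
    refine ⟨⟨fun h => absurd h (by norm_num), fun _ => hwv⟩, ⟨(k - 1) / 2, by omega, ?_⟩⟩
    rw [hwv, ← pow_mul]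
    congr 1
    omega
  · -- m ≥ 1
    have hz' := zeta_val v hm1 hζ
    have hζv : v ζ = 1 := aux_v_zeta_one v (by positivity) hζ.pow_eq_one
    have hvw : v w = v (ζ - 1) := by
      rcases Nat.eq_or_lt_of_le hk with hk2 | hk3
      · rw [hw, ← hk2]
        norm_num
      · have hsplit : w = ζ * ((5 : K) ^ (k - 2) - 1) + (ζ - 1) := by rw [hw]; ring
        have hfirst : v (ζ * ((5 : K) ^ (k - 2) - 1)) ≤ v (2 : K) ^ 2 := by
          rw [map_mul, hζv, one_mul, my_five v]
          calc v (2 : K) ^ 2 * v (((∑ i ∈ range (k - 2), 5 ^ i : ℕ) : K))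
              ≤ v (2 : K) ^ 2 * 1 := mul_le_mul_right (my_nat_le v hv _) _
            _ = v (2 : K) ^ 2 := mul_one _
        have hlt : v (2 : K) ^ 2 < v (ζ - 1) := by
          by_contra hle
          push_neg at hle
          have h14 : v (ζ - 1) ≤ (4⁻¹ : NNReal) := by
            rw [hv2] at hle
            refine le_trans hle ?_
            rw [show ((2:NNReal)⁻¹) ^ 2 = 4⁻¹ by
              rw [← NNReal.coe_inj]; push_cast; norm_num]
          have hchain : v (ζ - 1) ^ 2 ^ (m - 1) ≤ (4⁻¹ : NNReal) := by
            calc v (ζ - 1) ^ 2 ^ (m - 1) ≤ (4⁻¹ : NNReal) ^ 2 ^ (m - 1) :=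
                pow_le_pow_left' h14 _
              _ ≤ (4⁻¹ : NNReal) ^ 1 := by
                refine pow_le_pow_right_of_le_one' ?_ ?_
                · rw [← NNReal.coe_le_coe]; norm_num
                · exact Nat.one_le_two_pow
              _ = 4⁻¹ := pow_one _
          rw [hz', hv2] at hchain
          rw [← NNReal.coe_le_coe] at hchain
          norm_num at hchain
        rw [hsplit, Valuation.map_add_eq_of_lt_right _ (lt_of_le_of_lt hfirst hlt)]
    refine ⟨⟨fun _ => by rw [hvw]; exact hz', fun h => absurd h.1 (by omega)⟩,
      ⟨2 ^ (m - 1) * (k - 1), Nat.mul_pos (by positivity) (by omega), ?_⟩⟩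
    rw [pow_mul, hvw, hz']
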